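/- Let 0 < a ≤ b < 2, let α : ℝ → [a,b] be Lebesgue measurable, and let h₀ satisfy 1/a − 1/b < h₀ < 1 + 1/b − 1/a, with h₀ ≠ 1/α(x) for all x ∈ ℝ. Then for every t ∈ ℝ the linear fractional multistable kernel is in F_{a,b}: ∫_ℝ | (t−x)_+^{h₀ − 1/α(x)} − (−x)_+^{h₀ − 1/α(x)} |^{a,b} dx < ∞, where s_+^γ = s^γ if s > 0 and s_+^γ = 0 if s ≤ 0. -/

import Mathlib

open MeasureTheory Filter Set Topology ProbabilityTheory BoundedContinuousFunction

noncomputable section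

/-- Membership in `F_α`: `f` is measurable and either a.e. zero or there is a (unique)
`λ > 0` with `∫ |f(x)/λ|^{α(x)} dx = 1`. -/
def MemFalpha (α f : ℝ → ℝ) : Prop :=
  Measurable f ∧ (f =ᵐ[volume] (0 : ℝ → ℝ) ∨ ∃ lam > (0:ℝ), ∫ x : ℝ, |f x / lam| ^ α x = 1)

/-- The quasinorm `‖f‖_α`, the unique `λ > 0` with `∫ |f(x)/λ|^{α(x)} dx = 1`
(and `0` if no such `λ` exists, e.g. if `f = 0` a.e.). -/
def alphaNorm (α f : ℝ → ℝ) : ℝ :=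
  sInf {lam : ℝ | 0 < lam ∧ ∫ x : ℝ, |f x / lam| ^ α x = 1}

/-- `|s|^{a,b} = max{|s|^a, |s|^b}`. -/
def pab (a b s : ℝ) : ℝ := max (|s| ^ a) (|s| ^ b)

/-- Membership in `F_{a,b}`: measurable with `∫ |f(x)|^{a,b} dx < ∞`. -/
def MemFab (a b : ℝ) (f : ℝ → ℝ) : Prop :=
  Measurable f ∧ Integrable (fun x : ℝ => pab a b (f x))

/-- The norm `‖f‖_p = (∫ |f(x)|^p dx)^{1/p}`. -/
def pNorm (p : ℝ) (f : ℝ → ℝ) : ℝ := (∫ x : ℝ, |f x| ^ p) ^ (1 / p)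

/-- Membership in `E₀`: Lebesgue measurable with finite Lebesgue measure. -/
def MemE0 (A : Set ℝ) : Prop := MeasurableSet A ∧ volume A < ⊤

/-- `s_+^γ`: equals `s^γ` if `s > 0` and `0` if `s ≤ 0`. -/
def posPow (s γ : ℝ) : ℝ := if 0 < s then s ^ γ else 0

/- ### Auxiliary lemmas -/

private lemma posPow_nonneg (s γ : ℝ) : 0 ≤ posPow s γ := by
  unfold posPow; split_ifs with h
  · exact Real.rpow_nonneg h.le _
  · exact le_refl 0

private lemma measurable_posPow {u v : ℝ → ℝ} (hu : Measurable u) (hv : Measurable v) :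
    Measurable fun x => posPow (u x) (v x) := by
  simp only [posPow]
  exact Measurable.ite (measurableSet_lt measurable_const hu) (hu.pow hv) measurable_const

private lemma posPow_le_add {s γ glo ghi : ℝ} (h1 : glo ≤ γ) (h2 : γ ≤ ghi) :
    posPow s γ ≤ posPow s glo + posPow s ghi := by
  unfold posPow; split_ifs with h
  · rcases le_total s 1 with hs | hs
    · exact le_add_of_le_of_nonneg (Real.rpow_le_rpow_of_exponent_ge h hs h1)
        (Real.rpow_nonneg h.le _)
    · exact le_add_of_nonneg_of_le (Real.rpow_nonneg h.le _)
        (Real.rpow_le_rpow_of_exponent_le hs h2)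
  · simp

private lemma posPow_rpow {p : ℝ} (hp : 0 < p) (s c : ℝ) :
    posPow s c ^ p = posPow s (c * p) := by
  unfold posPow; split_ifs with h
  · exact (Real.rpow_mul h.le c p).symm
  · exact Real.zero_rpow hp.ne'

private lemma add_rpow_le {u v p : ℝ} (hu : 0 ≤ u) (hv : 0 ≤ v) (hp : 0 ≤ p) :
    (u + v) ^ p ≤ 2 ^ p * (u ^ p + v ^ p) := by
  have h2 : (0:ℝ) ≤ max u v := le_max_of_le_left hu
  calc (u + v) ^ p ≤ (2 * max u v) ^ p := by
        apply Real.rpow_le_rpow (by linarith) _ hp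
        have h3 := le_max_left u v; have h4 := le_max_right u v; linarith
    _ = 2 ^ p * (max u v) ^ p := Real.mul_rpow (by norm_num) h2
    _ ≤ 2 ^ p * (u ^ p + v ^ p) := by
        apply mul_le_mul_of_nonneg_left _ (Real.rpow_nonneg (by norm_num) _)
        rcases max_cases u v with ⟨h, _⟩ | ⟨h, _⟩ <;> rw [h]
        · exact le_add_of_le_of_nonneg le_rfl (Real.rpow_nonneg hv _)
        · exact le_add_of_nonneg_of_le (Real.rpow_nonneg hu _) le_rfl

private lemma pab_le_add (a b s : ℝ) : pab a b s ≤ |s| ^ a + |s| ^ b :=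
  max_le (le_add_of_le_of_nonneg le_rfl (Real.rpow_nonneg (abs_nonneg s) b))
    (le_add_of_nonneg_of_le (Real.rpow_nonneg (abs_nonneg s) a) le_rfl)

private lemma pab_nonneg (a b s : ℝ) : 0 ≤ pab a b s :=
  le_max_of_le_left (Real.rpow_nonneg (abs_nonneg s) a)

/-- Mean value theorem bound for differences of powers on `[m, ∞)` with `1 ≤ m`. -/
private lemma abs_rpow_sub_rpow_le {γ m A B : ℝ} (hγ : γ ≤ 1) (hm : 1 ≤ m)
    (hA : m ≤ A) (hB : m ≤ B) :
    |A ^ γ - B ^ γ| ≤ |γ| * m ^ (γ - 1) * |A - B| := by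
  have hconv : Convex ℝ (Icc m (max A B)) := convex_Icc _ _
  have hderiv : ∀ y ∈ Icc m (max A B),
      HasDerivWithinAt (fun z : ℝ => z ^ γ) (γ * y ^ (γ - 1)) (Icc m (max A B)) y := by
    intro y hy
    exact (Real.hasDerivAt_rpow_const
      (Or.inl (by linarith [hy.1] : y ≠ 0))).hasDerivWithinAt
  have hbound : ∀ y ∈ Icc m (max A B), ‖γ * y ^ (γ - 1)‖ ≤ |γ| * m ^ (γ - 1) := by
    intro y hy
    rw [norm_mul, Real.norm_eq_abs, Real.norm_eq_abs,
      abs_of_nonneg (Real.rpow_nonneg (by linarith [hy.1] : (0:ℝ) ≤ y) _)]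
    exact mul_le_mul_of_nonneg_left
      (Real.rpow_le_rpow_of_nonpos (by linarith) hy.1 (by linarith)) (abs_nonneg γ)
  have h := Convex.norm_image_sub_le_of_norm_hasDerivWithin_le hderiv hbound hconv
    (⟨hB, le_max_right A B⟩ : B ∈ Icc m (max A B))
    (⟨hA, le_max_left A B⟩ : A ∈ Icc m (max A B))
  simpa [Real.norm_eq_abs] using h

private lemma integrableOn_posPow_sub (c L u : ℝ) (hc : -1 < c) :
    IntegrableOn (fun x => posPow (u - x) c) (Ici L) volume := by
  rcases le_total u L with h | h
  · exact (integrableOn_zero (ε' := ℝ)).congr_fun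
      (fun x hx => (if_neg (by simp only [mem_Ici] at hx; intro h'; linarith)).symm)
      measurableSet_Ici
  · rw [← Ico_union_Ici_eq_Ici h]
    apply IntegrableOn.union
    · have h1 : IntervalIntegrable (fun x : ℝ => x ^ c) volume 0 (u - L) :=
        intervalIntegral.intervalIntegrable_rpow' hc
      have h2 := h1.comp_sub_left u
      rw [sub_zero, sub_sub_cancel] at h2
      have h3 := (intervalIntegrable_iff_integrableOn_Ico_of_le h).mp h2.symm
      exact h3.congr_fun (fun x hx => (if_pos (sub_pos.mpr hx.2)).symm) measurableSet_Ico
    · exact (integrableOn_zero (ε' := ℝ)).congr_fun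
        (fun x hx => (if_neg (by simp only [mem_Ici] at hx; intro h'; linarith)).symm)
        measurableSet_Ici

private lemma integrableOn_posPow_neg (c L : ℝ) (hc : -1 < c) :
    IntegrableOn (fun x : ℝ => posPow (-x) c) (Ici L) volume := by
  simpa [zero_sub] using integrableOn_posPow_sub c L 0 hc

private lemma integrableOn_neg_rpow {p R : ℝ} (hp : p < -1) (hR : 0 < R) :
    IntegrableOn (fun x : ℝ => (-x) ^ p) (Iio (-R)) volume := by
  have h0 := integrableOn_Ioi_rpow_of_lt hp hR
  have h := (MeasurePreserving.integrableOn_comp_preimage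
      (Measure.measurePreserving_neg (volume : Measure ℝ))
      (Homeomorph.neg ℝ).measurableEmbedding).2 h0
  have hset : ((Neg.neg : ℝ → ℝ) ⁻¹' Ioi R : Set ℝ) = Iio (-R) := by
    ext x; simp [lt_neg]
  rw [hset] at h
  exact h

/-- for `1/a − 1/b < h₀ < 1 + 1/b − 1/a` (with `h₀ ≠ 1/α(x)` for all `x`),
the linear fractional multistable kernel
`x ↦ (t−x)_+^{h₀−1/α(x)} − (−x)_+^{h₀−1/α(x)}` belongs to `F_{a,b}`. -/
theorem linear_fractional_multistable_kernel_integrable (a b : ℝ)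
    (ha : 0 < a) (hab : a ≤ b) (hb : b < 2)
    (α : ℝ → ℝ) (hαm : Measurable α) (hα : ∀ x, α x ∈ Set.Icc a b)
    (h₀ : ℝ) (hh₀l : 1 / a - 1 / b < h₀) (hh₀r : h₀ < 1 + 1 / b - 1 / a)
    (hh₀ : ∀ x, h₀ ≠ 1 / α x) (t : ℝ) :
    Integrable (fun x : ℝ =>
      pab a b (posPow (t - x) (h₀ - 1 / α x) - posPow (-x) (h₀ - 1 / α x))) := by
  have hb0 : 0 < b := lt_of_lt_of_le ha hab
  obtain ⟨glo, hglo_def⟩ : ∃ y : ℝ, y = h₀ - 1 / a := ⟨_, rfl⟩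
  obtain ⟨ghi, hghi_def⟩ : ∃ y : ℝ, y = h₀ - 1 / b := ⟨_, rfl⟩
  have hαpos : ∀ x, 0 < α x := fun x => lt_of_lt_of_le ha (hα x).1
  have hγ_lo : ∀ x, glo ≤ h₀ - 1 / α x := by
    intro x
    have h := one_div_le_one_div_of_le ha (hα x).1
    rw [hglo_def]; linarith
  have hγ_hi : ∀ x, h₀ - 1 / α x ≤ ghi := by
    intro x
    have h := one_div_le_one_div_of_le (hαpos x) (hα x).2
    rw [hghi_def]; linarith
  have hglo_le_ghi : glo ≤ ghi := le_trans (hγ_lo 0) (hγ_hi 0)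
  have hglo_gt : -(1 / b) < glo := by rw [hglo_def]; linarith
  have h_lo_b : -1 < glo * b := by
    have h1 := mul_lt_mul_of_pos_right hglo_gt hb0
    rw [neg_mul, one_div, inv_mul_cancel₀ hb0.ne'] at h1
    linarith
  have h_lo_a : -1 < glo * a := by
    have h1 := mul_lt_mul_of_pos_right hglo_gt ha
    have h2 : 1 / b * a ≤ 1 := by
      rw [div_mul_eq_mul_div, one_mul, div_le_one hb0]; exact hab
    nlinarith
  have h_hi_a : -1 < ghi * a :=
    lt_of_lt_of_le h_lo_a (mul_le_mul_of_nonneg_right hglo_le_ghi ha.le)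
  have h_hi_b : -1 < ghi * b :=
    lt_of_lt_of_le h_lo_b (mul_le_mul_of_nonneg_right hglo_le_ghi hb0.le)
  have ha_inv_pos : 0 < 1 / a := by positivity
  have hghi1 : ghi - 1 < -(1 / a) := by rw [hghi_def]; linarith
  have hghi1_neg : ghi - 1 < 0 := by linarith
  have hDa : (ghi - 1) * a < -1 := by
    have h1 := mul_lt_mul_of_pos_right hghi1 ha
    rw [neg_mul, one_div, inv_mul_cancel₀ ha.ne'] at h1
    linarith
  have hDb : (ghi - 1) * b < -1 :=
    lt_of_le_of_lt (by nlinarith : (ghi - 1) * b ≤ (ghi - 1) * a) hDa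
  have hγ_le1 : ∀ x, h₀ - 1 / α x ≤ 1 := fun x => le_trans (hγ_hi x) (by linarith)
  set f : ℝ → ℝ := fun x => posPow (t - x) (h₀ - 1 / α x) - posPow (-x) (h₀ - 1 / α x)
    with hf
  have hγm : Measurable fun x : ℝ => h₀ - 1 / α x :=
    measurable_const.sub (measurable_const.div hαm)
  have hfm : Measurable f :=
    (measurable_posPow (measurable_const.sub measurable_id) hγm).sub
      (measurable_posPow measurable_neg hγm)
  have hFm : Measurable fun x => pab a b (f x) := by
    simp only [pab]
    exact (hfm.abs.pow measurable_const).max (hfm.abs.pow measurable_const)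
  obtain ⟨R, hR⟩ : ∃ y : ℝ, y = 2 * |t| + 2 := ⟨_, rfl⟩
  have hRpos : 0 < R := by rw [hR]; positivity
  rw [← integrableOn_univ, ← Iio_union_Ici (a := -R)]
  apply IntegrableOn.union
  · -- Iio (-R) : decay at -∞
    obtain ⟨G, hG⟩ : ∃ y : ℝ, y = max |glo| |ghi| := ⟨_, rfl⟩
    obtain ⟨C, hC⟩ : ∃ y : ℝ, y = G * 2 ^ (1 - ghi) * |t| := ⟨_, rfl⟩
    have hGnn : 0 ≤ G := hG ▸ le_trans (abs_nonneg glo) (le_max_left _ _)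
    have hCnn : 0 ≤ C := by
      rw [hC]
      exact mul_nonneg (mul_nonneg hGnn (Real.rpow_nonneg (by norm_num) _)) (abs_nonneg t)
    have hbound : ∀ x ∈ Iio (-R),
        pab a b (f x) ≤ C ^ a * (-x) ^ ((ghi - 1) * a) + C ^ b * (-x) ^ ((ghi - 1) * b) := by
      intro x hx
      simp only [mem_Iio] at hx
      have hxR : R < -x := by linarith
      have hxt : |t| < (-x) / 2 - 1 := by rw [hR] at hxR; linarith
      have hm1 : (1:ℝ) ≤ (-x) / 2 := by
        have := abs_nonneg t; linarith
      have hmA : (-x) / 2 ≤ t - x := by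
        have := neg_abs_le t; linarith
      have hmB : (-x) / 2 ≤ -x := by linarith
      have hxpos : (0:ℝ) < -x := by linarith
      have hfx : f x = (t - x) ^ (h₀ - 1 / α x) - (-x) ^ (h₀ - 1 / α x) := by
        simp only [hf, posPow]
        rw [if_pos (by linarith), if_pos (by linarith)]
      have hmvt := abs_rpow_sub_rpow_le (hγ_le1 x) hm1 hmA hmB
      rw [show (t - x) - (-x) = t by ring] at hmvt
      have h1 : |h₀ - 1 / α x| ≤ G := by
        apply abs_le.2
        constructor
        · have h2 := neg_abs_le glo
          have h3 := hγ_lo x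
          have h4 : |glo| ≤ G := hG ▸ le_max_left _ _
          linarith
        · have h2 := le_abs_self ghi
          have h3 := hγ_hi x
          have h4 : |ghi| ≤ G := hG ▸ le_max_right _ _
          linarith
      have h2 : ((-x) / 2) ^ (h₀ - 1 / α x - 1) ≤ 2 ^ (1 - ghi) * (-x) ^ (ghi - 1) := by
        calc ((-x) / 2) ^ (h₀ - 1 / α x - 1) ≤ ((-x) / 2) ^ (ghi - 1) :=
              Real.rpow_le_rpow_of_exponent_le hm1 (by linarith [hγ_hi x])
          _ = (-x) ^ (ghi - 1) / 2 ^ (ghi - 1) :=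
              Real.div_rpow hxpos.le (by norm_num) _
          _ = 2 ^ (1 - ghi) * (-x) ^ (ghi - 1) := by
              rw [show (1 - ghi) = -(ghi - 1) by ring,
                Real.rpow_neg (by norm_num : (0:ℝ) ≤ 2)]
              ring
      have hfb : |f x| ≤ C * (-x) ^ (ghi - 1) := by
        rw [hfx]
        calc |(t - x) ^ (h₀ - 1 / α x) - (-x) ^ (h₀ - 1 / α x)|
            ≤ |h₀ - 1 / α x| * ((-x) / 2) ^ (h₀ - 1 / α x - 1) * |t| := hmvt
          _ ≤ G * (2 ^ (1 - ghi) * (-x) ^ (ghi - 1)) * |t| := by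
              apply mul_le_mul_of_nonneg_right _ (abs_nonneg t)
              exact mul_le_mul h1 h2 (Real.rpow_nonneg (by linarith) _) hGnn
          _ = C * (-x) ^ (ghi - 1) := by rw [hC]; ring
      have key : ∀ p : ℝ, 0 ≤ p → |f x| ^ p ≤ C ^ p * (-x) ^ ((ghi - 1) * p) := by
        intro p hp
        calc |f x| ^ p ≤ (C * (-x) ^ (ghi - 1)) ^ p :=
              Real.rpow_le_rpow (abs_nonneg _) hfb hp
          _ = C ^ p * ((-x) ^ (ghi - 1)) ^ p :=
              Real.mul_rpow hCnn (Real.rpow_nonneg hxpos.le _)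
          _ = C ^ p * (-x) ^ ((ghi - 1) * p) := by rw [← Real.rpow_mul hxpos.le]
      calc pab a b (f x) ≤ |f x| ^ a + |f x| ^ b := pab_le_add _ _ _
        _ ≤ _ := add_le_add (key a ha.le) (key b hb0.le)
    have hgi : IntegrableOn
        (fun x : ℝ => C ^ a * (-x) ^ ((ghi - 1) * a) + C ^ b * (-x) ^ ((ghi - 1) * b))
        (Iio (-R)) volume :=
      ((integrableOn_neg_rpow hDa hRpos).const_mul _).add
        ((integrableOn_neg_rpow hDb hRpos).const_mul _)
    apply Integrable.mono' hgi (hFm.aestronglyMeasurable.restrict)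
    rw [ae_restrict_iff' measurableSet_Iio]
    refine ae_of_all _ fun x hx => ?_
    rw [Real.norm_eq_abs, abs_of_nonneg (pab_nonneg _ _ _)]
    exact hbound x hx
  · -- Ici (-R) : local integrability
    have hg2i : IntegrableOn (fun x : ℝ =>
        2 ^ a * (2 ^ a * (posPow (t - x) (glo * a) + posPow (t - x) (ghi * a))
          + 2 ^ a * (posPow (-x) (glo * a) + posPow (-x) (ghi * a)))
        + 2 ^ b * (2 ^ b * (posPow (t - x) (glo * b) + posPow (t - x) (ghi * b))
          + 2 ^ b * (posPow (-x) (glo * b) + posPow (-x) (ghi * b))))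
        (Ici (-R)) volume := by
      apply Integrable.add
      · apply Integrable.const_mul
        apply Integrable.add <;> apply Integrable.const_mul
        · exact (integrableOn_posPow_sub _ _ _ h_lo_a).add
            (integrableOn_posPow_sub _ _ _ h_hi_a)
        · exact (integrableOn_posPow_neg _ _ h_lo_a).add
            (integrableOn_posPow_neg _ _ h_hi_a)
      · apply Integrable.const_mul
        apply Integrable.add <;> apply Integrable.const_mul
        · exact (integrableOn_posPow_sub _ _ _ h_lo_b).add
            (integrableOn_posPow_sub _ _ _ h_hi_b)
        · exact (integrableOn_posPow_neg _ _ h_lo_b).add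
            (integrableOn_posPow_neg _ _ h_hi_b)
    have hbound2 : ∀ x : ℝ, pab a b (f x) ≤
        2 ^ a * (2 ^ a * (posPow (t - x) (glo * a) + posPow (t - x) (ghi * a))
          + 2 ^ a * (posPow (-x) (glo * a) + posPow (-x) (ghi * a)))
        + 2 ^ b * (2 ^ b * (posPow (t - x) (glo * b) + posPow (t - x) (ghi * b))
          + 2 ^ b * (posPow (-x) (glo * b) + posPow (-x) (ghi * b))) := by
      intro x
      have hT1 := posPow_nonneg (t - x) glo
      have hT2 := posPow_nonneg (t - x) ghi
      have hT3 := posPow_nonneg (-x) glo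
      have hT4 := posPow_nonneg (-x) ghi
      have hS : |f x| ≤ (posPow (t - x) glo + posPow (t - x) ghi)
          + (posPow (-x) glo + posPow (-x) ghi) := by
        have hA := posPow_le_add (s := t - x) (hγ_lo x) (hγ_hi x)
        have hB := posPow_le_add (s := -x) (hγ_lo x) (hγ_hi x)
        have h0A := posPow_nonneg (t - x) (h₀ - 1 / α x)
        have h0B := posPow_nonneg (-x) (h₀ - 1 / α x)
        apply abs_le.2
        constructor
        · simp only [hf]; linarith
        · simp only [hf]; linarith
      have key : ∀ p : ℝ, 0 < p → |f x| ^ p ≤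
          2 ^ p * (2 ^ p * (posPow (t - x) (glo * p) + posPow (t - x) (ghi * p))
            + 2 ^ p * (posPow (-x) (glo * p) + posPow (-x) (ghi * p))) := by
        intro p hp
        have hs1 : 0 ≤ posPow (t - x) glo + posPow (t - x) ghi := add_nonneg hT1 hT2
        have hs2 : 0 ≤ posPow (-x) glo + posPow (-x) ghi := add_nonneg hT3 hT4
        calc |f x| ^ p
            ≤ ((posPow (t - x) glo + posPow (t - x) ghi)
              + (posPow (-x) glo + posPow (-x) ghi)) ^ p :=
              Real.rpow_le_rpow (abs_nonneg _) hS hp.le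
          _ ≤ 2 ^ p * ((posPow (t - x) glo + posPow (t - x) ghi) ^ p
              + (posPow (-x) glo + posPow (-x) ghi) ^ p) :=
              add_rpow_le hs1 hs2 hp.le
          _ ≤ 2 ^ p * (2 ^ p * (posPow (t - x) glo ^ p + posPow (t - x) ghi ^ p)
              + 2 ^ p * (posPow (-x) glo ^ p + posPow (-x) ghi ^ p)) :=
              mul_le_mul_of_nonneg_left
                (add_le_add (add_rpow_le hT1 hT2 hp.le) (add_rpow_le hT3 hT4 hp.le))
                (Real.rpow_nonneg (by norm_num) _)
          _ = _ := by
              rw [posPow_rpow hp, posPow_rpow hp, posPow_rpow hp, posPow_rpow hp]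
      calc pab a b (f x) ≤ |f x| ^ a + |f x| ^ b := pab_le_add _ _ _
        _ ≤ _ := add_le_add (key a ha) (key b hb0)
    apply Integrable.mono' hg2i (hFm.aestronglyMeasurable.restrict)
    refine ae_of_all _ fun x => ?_
    rw [Real.norm_eq_abs, abs_of_nonneg (pab_nonneg _ _ _)]
    exact hbound2 x
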